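/- For W(x) = 1/(1+|x|/2) on ℝ³ and L₊ f := −Δf − 3|x|⁻¹ W² f, one has L₊W = −2|x|⁻¹W³ = 2ΔW pointwise for x ≠ 0, and consequently ⟨L₊W, W⟩_{L²} = −2∫|∇W|² dx = −16π/3. -/

import Mathlib

open MeasureTheory Real

noncomputable section

abbrev E3 := EuclideanSpace ℝ (Fin 3)

def W (x : E3) : ℝ := (1 + ‖x‖ / 2)⁻¹

def lap (f : E3 → ℝ) (x : E3) : ℝ :=
  ∑ i : Fin 3,
    fderiv ℝ (fun y => fderiv ℝ f y (EuclideanSpace.single i 1)) x (EuclideanSpace.single i 1)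

/-- The linearized operator `L₊ f = -Δf - 3|x|⁻¹ W² f`. -/
def Lplus (f : E3 → ℝ) (x : E3) : ℝ := -lap f x - 3 * ‖x‖⁻¹ * (W x) ^ 2 * f x

/-! ### Auxiliary lemmas -/

lemma hasFDerivAt_norm' (x : E3) (hx : x ≠ 0) :
    HasFDerivAt (fun y : E3 => ‖y‖) (‖x‖⁻¹ • (innerSL ℝ x : E3 →L[ℝ] ℝ)) x := by
  have h1 : HasFDerivAt (fun y : E3 => ‖y‖ ^ 2) ((2:ℕ) • (innerSL ℝ x : E3 →L[ℝ] ℝ)) x :=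
    (hasStrictFDerivAt_norm_sq x).hasFDerivAt
  have hs : (‖x‖ ^ 2 : ℝ) ≠ 0 := pow_ne_zero _ (norm_ne_zero_iff.mpr hx)
  have h2 := (Real.hasDerivAt_sqrt hs).comp_hasFDerivAt x h1
  have heq : ((fun s => Real.sqrt s) ∘ fun y : E3 => ‖y‖ ^ 2) = fun y : E3 => ‖y‖ := by
    funext y; simp [Function.comp, Real.sqrt_sq (norm_nonneg y)]
  rw [heq] at h2
  refine h2.congr_fderiv ?_
  rw [Real.sqrt_sq (norm_nonneg x)]
  ext v
  have hn : ‖x‖ ≠ 0 := norm_ne_zero_iff.mpr hx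
  simp [smul_smul]
  field_simp

/-- radial factor of the gradient of `W` -/
def kk (r : ℝ) : ℝ := -(1/2) * ((1 + r/2)⁻¹)^2 * r⁻¹

/-- derivative of `kk` -/
def kkd (r : ℝ) : ℝ := (1/2) * (r⁻¹)^2 * ((1 + r/2)⁻¹)^2 + (1/2) * r⁻¹ * ((1 + r/2)⁻¹)^3

lemma upos (r : ℝ) (hr : 0 < r) : (0:ℝ) < 1 + r/2 := by linarith

lemma hasDerivAt_kk (r : ℝ) (hr : 0 < r) : HasDerivAt kk (kkd r) r := by
  have hu : (1 + r/2 : ℝ) ≠ 0 := (upos r hr).ne'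
  have h1 : HasDerivAt (fun s : ℝ => 1 + s/2) (1/2) r := by
    simpa using ((hasDerivAt_id r).div_const 2).const_add 1
  have h2 := h1.inv hu
  have h3 := h2.pow 2
  have h4 := hasDerivAt_inv hr.ne'
  have h5 := (h3.mul h4).const_mul (-(1/2) : ℝ)
  have hfn : kk = fun s : ℝ => -(1/2) * (((1 + s/2)⁻¹)^2 * s⁻¹) := by
    funext s; unfold kk; ring
  rw [hfn]
  refine h5.congr_deriv ?_
  unfold kkd
  simp only [Pi.inv_apply, Pi.pow_apply, smul_eq_mul, Nat.cast_ofNat, Nat.add_one_sub_one, pow_one]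
  field_simp
  ring

lemma hasFDerivAt_W (x : E3) (hx : x ≠ 0) :
    HasFDerivAt W ((kk ‖x‖) • (innerSL ℝ x : E3 →L[ℝ] ℝ)) x := by
  have hr : (0:ℝ) < ‖x‖ := norm_pos_iff.mpr hx
  have hu : (1 + ‖x‖/2 : ℝ) ≠ 0 := (upos _ hr).ne'
  have h1 : HasDerivAt (fun s : ℝ => 1 + s/2) (1/2) ‖x‖ := by
    simpa using ((hasDerivAt_id ‖x‖).div_const 2).const_add 1
  have h2 := (h1.inv hu).comp_hasFDerivAt x (hasFDerivAt_norm' x hx)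
  have hfn : ((fun s : ℝ => 1 + s/2)⁻¹ ∘ Norm.norm) = W := rfl
  rw [hfn] at h2
  refine h2.congr_fderiv ?_
  rw [smul_smul]
  congr 1
  unfold kk
  field_simp

lemma hasFDerivAt_kk_norm (x : E3) (hx : x ≠ 0) :
    HasFDerivAt (fun y : E3 => kk ‖y‖) ((kkd ‖x‖ * ‖x‖⁻¹) • (innerSL ℝ x : E3 →L[ℝ] ℝ)) x := by
  have hr : (0:ℝ) < ‖x‖ := norm_pos_iff.mpr hx
  have h := (hasDerivAt_kk ‖x‖ hr).comp_hasFDerivAt x (hasFDerivAt_norm' x hx)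
  refine h.congr_fderiv ?_
  rw [smul_smul]

lemma fderiv_W_eq (y : E3) (hy : y ≠ 0) :
    fderiv ℝ W y = (kk ‖y‖) • (innerSL ℝ y : E3 →L[ℝ] ℝ) := (hasFDerivAt_W y hy).fderiv

lemma lap_W (x : E3) (hx : x ≠ 0) : lap W x = -‖x‖⁻¹ * (W x)^3 := by
  have hr : (0:ℝ) < ‖x‖ := norm_pos_iff.mpr hx
  have hu : (0:ℝ) < 1 + ‖x‖/2 := upos _ hr
  have key : ∀ i : Fin 3,
      fderiv ℝ (fun y => fderiv ℝ W y (EuclideanSpace.single i 1)) x (EuclideanSpace.single i 1)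
        = kk ‖x‖ + (kkd ‖x‖ * ‖x‖⁻¹) * (x i)^2 := by
    intro i
    have hφ : HasFDerivAt (fun y : E3 => kk ‖y‖ * (y i))
        ((kk ‖x‖) • (EuclideanSpace.proj i : E3 →L[ℝ] ℝ)
          + (x i) • ((kkd ‖x‖ * ‖x‖⁻¹) • (innerSL ℝ x : E3 →L[ℝ] ℝ))) x := by
      have hc : HasFDerivAt (fun y : E3 => y i) (EuclideanSpace.proj i : E3 →L[ℝ] ℝ) x :=
        (EuclideanSpace.proj i : E3 →L[ℝ] ℝ).hasFDerivAt
      exact (hasFDerivAt_kk_norm x hx).mul hc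
    have heq : (fun y : E3 => fderiv ℝ W y (EuclideanSpace.single i 1))
        =ᶠ[nhds x] (fun y : E3 => kk ‖y‖ * (y i)) := by
      filter_upwards [IsOpen.mem_nhds isOpen_compl_singleton hx] with y hy
      rw [fderiv_W_eq y hy]
      simp [EuclideanSpace.inner_single_right, real_inner_comm]
    rw [Filter.EventuallyEq.fderiv_eq heq, hφ.fderiv]
    simp [EuclideanSpace.inner_single_right]
    ring
  have hsum : ∑ i : Fin 3, (x i)^2 = ‖x‖^2 := by
    rw [EuclideanSpace.norm_eq, Real.sq_sqrt]
    · simp [Real.norm_eq_abs, sq_abs]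
    · positivity
  unfold lap
  rw [Finset.sum_congr rfl (fun i _ => key i)]
  rw [Finset.sum_add_distrib, ← Finset.mul_sum, hsum]
  rw [Finset.sum_const, Finset.card_univ, Fintype.card_fin, nsmul_eq_mul]
  unfold W kk kkd
  field_simp
  ring

lemma gradient_W (x : E3) (hx : x ≠ 0) : gradient W x = (kk ‖x‖) • x := by
  have h : HasGradientAt W ((kk ‖x‖) • x) x := by
    rw [hasGradientAt_iff_hasFDerivAt]
    refine (hasFDerivAt_W x hx).congr_fderiv ?_
    ext v
    simp [InnerProductSpace.toDual_apply_apply, real_inner_smul_left]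
  exact h.gradient

lemma grad_norm_sq (x : E3) (hx : x ≠ 0) :
    ‖gradient W x‖^2 = (1/4) * ((1 + ‖x‖/2)⁻¹)^4 := by
  have hr : (0:ℝ) < ‖x‖ := norm_pos_iff.mpr hx
  have hu : (0:ℝ) < 1 + ‖x‖/2 := upos _ hr
  rw [gradient_W x hx, norm_smul, Real.norm_eq_abs, mul_pow, sq_abs]
  unfold kk
  field_simp
  ring

lemma vol_ball3 : (volume (Metric.ball (0 : E3) 1)).toReal = 4 * π / 3 := by
  rw [EuclideanSpace.volume_ball]
  have hΓ : Real.Gamma ((Fintype.card (Fin 3) : ℝ) / 2 + 1) = 3/4 * Real.sqrt π := by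
    rw [Fintype.card_fin]
    push_cast
    have h32 : (3:ℝ)/2 = 1/2 + 1 := by norm_num
    rw [Real.Gamma_add_one (by norm_num), h32, Real.Gamma_add_one (by norm_num),
      Real.Gamma_one_half_eq]
    ring
  rw [hΓ]
  have hs : Real.sqrt π ^ Fintype.card (Fin 3) = π * Real.sqrt π := by
    rw [Fintype.card_fin, pow_succ, sq_sqrt pi_nonneg]
  rw [hs]
  have hsp : Real.sqrt π > 0 := Real.sqrt_pos.mpr pi_pos
  have hval : π * Real.sqrt π / (3/4 * Real.sqrt π) = 4 * π / 3 := by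
    field_simp
  rw [hval]
  simp [ENNReal.toReal_ofReal (by positivity : (0:ℝ) ≤ 4 * π / 3)]

def F1 (r : ℝ) : ℝ := -2*(1+r/2)⁻¹ + 2*((1+r/2)⁻¹)^2 - (2/3)*((1+r/2)⁻¹)^3
def F2 (r : ℝ) : ℝ := -2*((1+r/2)⁻¹)^2 + (4/3)*((1+r/2)⁻¹)^3

lemma tendsto_u : Filter.Tendsto (fun r : ℝ => (1+r/2)⁻¹) Filter.atTop (nhds 0) := by
  apply Filter.Tendsto.comp tendsto_inv_atTop_zero
  apply Filter.tendsto_atTop_add_const_left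
  exact Filter.Tendsto.atTop_div_const (by norm_num) Filter.tendsto_id

lemma oneD1 : ∫ y in Set.Ioi (0:ℝ), y^2 • ((1/4) * ((1+y/2)⁻¹)^4) = 2/3 := by
  have key := integral_Ioi_of_hasDerivAt_of_nonneg' (g := F1)
      (g' := fun y => y^2 • ((1/4) * ((1+y/2)⁻¹)^4)) (a := 0)
      (l := 0) ?_ ?_ ?_
  · rw [key]
    norm_num [F1]
  · intro x hx
    have hx0 : (0:ℝ) ≤ x := hx
    have hu : (1 + x/2 : ℝ) ≠ 0 := by positivity
    have h1 : HasDerivAt (fun s : ℝ => 1 + s/2) (1/2) x := by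
      simpa using ((hasDerivAt_id x).div_const 2).const_add 1
    have hv := h1.inv hu
    have h := ((hv.const_mul (-2:ℝ)).add ((hv.pow 2).const_mul 2)).sub
      ((hv.pow 3).const_mul (2/3))
    have hfn : F1 = fun s : ℝ => (-2*(1+s/2)⁻¹ + 2*((1+s/2)⁻¹)^2) - (2/3)*((1+s/2)⁻¹)^3 := by
      funext s; unfold F1; ring
    rw [hfn]
    refine h.congr_deriv ?_
    simp only [Pi.inv_apply, Pi.pow_apply, smul_eq_mul, Nat.cast_ofNat, Nat.add_one_sub_one, pow_one]
    field_simp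
    ring
  · intro x hx
    have : (0:ℝ) < x := hx
    positivity
  · have h := tendsto_u
    have h2 := ((h.const_mul (-2:ℝ)).add ((h.pow 2).const_mul 2)).sub ((h.pow 3).const_mul (2/3))
    have hfn : F1 = fun r : ℝ => -2 * (1+r/2)⁻¹ + 2 * ((1+r/2)⁻¹)^2 - 2/3 * ((1+r/2)⁻¹)^3 := by
      funext s; unfold F1; ring
    rw [hfn]
    convert h2 using 2
    norm_num

lemma oneD2 : ∫ y in Set.Ioi (0:ℝ), y^2 • (y⁻¹ * ((1+y/2)⁻¹)^4) = 2/3 := by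
  have key := integral_Ioi_of_hasDerivAt_of_nonneg' (g := F2)
      (g' := fun y => y^2 • (y⁻¹ * ((1+y/2)⁻¹)^4)) (a := 0)
      (l := 0) ?_ ?_ ?_
  · rw [key]
    norm_num [F2]
  · intro x hx
    have hx0 : (0:ℝ) ≤ x := hx
    have hu : (1 + x/2 : ℝ) ≠ 0 := by positivity
    have h1 : HasDerivAt (fun s : ℝ => 1 + s/2) (1/2) x := by
      simpa using ((hasDerivAt_id x).div_const 2).const_add 1
    have hv := h1.inv hu
    have h := ((hv.pow 2).const_mul (-2:ℝ)).add ((hv.pow 3).const_mul (4/3))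
    have hfn : F2 = fun s : ℝ => -2*((1+s/2)⁻¹)^2 + (4/3)*((1+s/2)⁻¹)^3 := rfl
    rw [hfn]
    rcases eq_or_lt_of_le hx0 with h0 | h0
    · subst h0
      refine h.congr_deriv ?_
      norm_num
    · refine h.congr_deriv ?_
      simp only [Pi.inv_apply, Pi.pow_apply, smul_eq_mul, Nat.cast_ofNat, Nat.add_one_sub_one, pow_one]
      field_simp
      ring
  · intro x hx
    have : (0:ℝ) < x := hx
    positivity
  · have h := tendsto_u
    have h2 := ((h.pow 2).const_mul (-2:ℝ)).add ((h.pow 3).const_mul (4/3))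
    have hfn : F2 = fun r : ℝ => -2 * ((1+r/2)⁻¹)^2 + 4/3 * ((1+r/2)⁻¹)^3 := by
      funext s; unfold F2; ring
    rw [hfn]
    convert h2 using 2
    norm_num

lemma ae_ne_zero : ∀ᵐ x : E3, x ≠ 0 := by
  rw [MeasureTheory.ae_iff]
  simpa using MeasureTheory.measure_singleton (0 : E3)

lemma int_grad : (∫ x : E3, ‖gradient W x‖ ^ 2) = 8 * π / 3 := by
  have hae : (fun x : E3 => ‖gradient W x‖^2)
      =ᵐ[volume] (fun x : E3 => (fun r : ℝ => (1/4) * ((1 + r/2)⁻¹)^4) ‖x‖) := by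
    filter_upwards [ae_ne_zero] with x hx
    exact grad_norm_sq x hx
  rw [integral_congr_ae hae,
    MeasureTheory.integral_fun_norm_addHaar volume (fun r : ℝ => (1/4) * ((1 + r/2)⁻¹)^4)]
  have h3 : Module.finrank ℝ E3 = 3 := finrank_euclideanSpace_fin
  rw [h3, measureReal_def, vol_ball3]
  rw [show (3 - 1 : ℕ) = 2 from rfl, oneD1]
  simp only [nsmul_eq_mul, smul_eq_mul]
  norm_num
  ring

lemma int_pot : (∫ x : E3, ‖x‖⁻¹ * (W x) ^ 4) = 8 * π / 3 := by
  have hfn : (fun x : E3 => ‖x‖⁻¹ * (W x)^4)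
      = fun x : E3 => (fun r : ℝ => r⁻¹ * ((1 + r/2)⁻¹)^4) ‖x‖ := rfl
  rw [hfn,
    MeasureTheory.integral_fun_norm_addHaar volume (fun r : ℝ => r⁻¹ * ((1 + r/2)⁻¹)^4)]
  have h3 : Module.finrank ℝ E3 = 3 := finrank_euclideanSpace_fin
  rw [h3, measureReal_def, vol_ball3]
  rw [show (3 - 1 : ℕ) = 2 from rfl, oneD2]
  simp only [nsmul_eq_mul, smul_eq_mul]
  norm_num
  ring

theorem stmt_7 :
    (∀ x : E3, x ≠ 0 → Lplus W x = -2 * ‖x‖⁻¹ * (W x) ^ 3 ∧ Lplus W x = 2 * lap W x) ∧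
    (∫ x : E3, ‖gradient W x‖ ^ 2) - 3 * (∫ x : E3, ‖x‖⁻¹ * (W x) ^ 4)
      = -2 * (∫ x : E3, ‖gradient W x‖ ^ 2) ∧
    (∫ x : E3, ‖gradient W x‖ ^ 2) - 3 * (∫ x : E3, ‖x‖⁻¹ * (W x) ^ 4) = -(16 * π / 3) := by
  refine ⟨?_, ?_, ?_⟩
  · intro x hx
    have hl := lap_W x hx
    constructor
    · unfold Lplus; rw [hl]; ring
    · unfold Lplus; rw [hl]; ring
  · rw [int_grad, int_pot]; ring
  · rw [int_grad, int_pot]; ring
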